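/- Suppose each H_m is a nonzero finite-dimensional complex Hilbert space, (C_j) is an asymptotic expansion for T, and there are n ∈ ℕ and a constant C ≥ 0 with dim H_m ≤ C·m^n for all m ≥ 1. Suppose further there are ℂ-linear functionals τ_j : A → ℂ (j ∈ ℕ) such that for every a ∈ A and every N ∈ ℕ there is a constant K ≥ 0 with |Tr(T^(m)(a)) − m^n·∑_{j=0}^{N−1} m^{−j} τ_j(a)| ≤ K·m^{n−N} for all m ≥ 1, where Tr denotes the operator trace on H_m. Then the formal trace is cyclic: for every k ∈ ℕ and all f, g ∈ A, ∑_{l=0}^{k} τ_l(C_{k−l}(f,g)) = ∑_{l=0}^{k} τ_l(C_{k−l}(g,f)); equivalently the ℂ[[ν]]-linear functional Tr(f) := ν^{−n} ∑_{j≥0} ν^j τ_j(f) satisfies Tr(f ⋆ g) = Tr(g ⋆ f). -/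

import Mathlib

open Filter Finset MeasureTheory

variable {X : Type*} [TopologicalSpace X] [CompactSpace X]
variable {H : ℕ → Type*} [∀ m, NormedAddCommGroup (H m)]
  [∀ m, InnerProductSpace ℂ (H m)] [∀ m, CompleteSpace (H m)]

/-- `T` satisfies the norm-limit property if `‖T^(m)(f)‖ → ‖f‖_∞` for every `f ∈ C(X, ℂ)`. -/
def NormLimitProperty (T : ∀ m : ℕ, C(X, ℂ) →ₗ[ℂ] (H m →L[ℂ] H m)) : Prop :=
  ∀ f : C(X, ℂ), Tendsto (fun m : ℕ => ‖T m f‖) atTop (nhds ‖f‖)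

/-- A family of ℂ-bilinear maps `C_j` is an asymptotic expansion for `T` if for all
`f, g` and every `N` there is `K ≥ 0` with
`‖T^(m)(f)·T^(m)(g) − ∑_{j<N} m^{−j} T^(m)(C_j(f,g))‖ ≤ K·m^{−N}` for all `m ≥ 1`. -/
def IsAsymptoticExpansion (T : ∀ m : ℕ, C(X, ℂ) →ₗ[ℂ] (H m →L[ℂ] H m))
    (C : ℕ → C(X, ℂ) →ₗ[ℂ] C(X, ℂ) →ₗ[ℂ] C(X, ℂ)) : Prop :=
  ∀ (f g : C(X, ℂ)) (N : ℕ), ∃ K : ℝ, 0 ≤ K ∧ ∀ m : ℕ, 1 ≤ m →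
    ‖T m f * T m g - ∑ j ∈ Finset.range N, ((m : ℂ)⁻¹) ^ j • T m (C j f g)‖
      ≤ K * ((m : ℝ)⁻¹) ^ N

section Aux

lemma norm_trace_le' {E : Type*} [NormedAddCommGroup E] [InnerProductSpace ℂ E]
    [FiniteDimensional ℂ E] (A : E →L[ℂ] E) :
    ‖LinearMap.trace ℂ E A.toLinearMap‖ ≤ (Module.finrank ℂ E : ℝ) * ‖A‖ := by
  classical
  set b := stdOrthonormalBasis ℂ E with hb
  rw [LinearMap.trace_eq_matrix_trace ℂ b.toBasis, Matrix.trace]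
  calc ‖∑ i, (LinearMap.toMatrix b.toBasis b.toBasis A.toLinearMap).diag i‖
      ≤ ∑ i, ‖(LinearMap.toMatrix b.toBasis b.toBasis A.toLinearMap).diag i‖ :=
        norm_sum_le _ _
    _ ≤ ∑ _i : Fin (Module.finrank ℂ E), ‖A‖ := by
        refine Finset.sum_le_sum fun i _ => ?_
        rw [Matrix.diag_apply, LinearMap.toMatrix_apply,
          OrthonormalBasis.coe_toBasis, OrthonormalBasis.coe_toBasis_repr_apply,
          OrthonormalBasis.repr_apply_apply]
        calc ‖(inner ℂ (b i) (A (b i)) : ℂ)‖ ≤ ‖b i‖ * ‖A (b i)‖ := norm_inner_le_norm _ _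
          _ = ‖A (b i)‖ := by rw [b.orthonormal.1 i, one_mul]
          _ ≤ ‖A‖ * ‖b i‖ := A.le_opNorm (b i)
          _ = ‖A‖ := by rw [b.orthonormal.1 i, mul_one]
    _ = (Module.finrank ℂ E : ℝ) * ‖A‖ := by
        rw [Finset.sum_const, Finset.card_univ, Fintype.card_fin, nsmul_eq_mul]

lemma triangle_sum' {M : Type*} [AddCommMonoid M] (F : ℕ → ℕ → M) (N : ℕ) :
    ∑ j ∈ Finset.range N, ∑ l ∈ Finset.range (N - j), F j l
      = ∑ k ∈ Finset.range N, ∑ l ∈ Finset.range (k + 1), F (k - l) l := by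
  induction N with
  | zero => simp
  | succ N ih =>
    have h1 : ∑ j ∈ Finset.range N, ∑ l ∈ Finset.range (N + 1 - j), F j l
        = (∑ j ∈ Finset.range N, ∑ l ∈ Finset.range (N - j), F j l)
          + ∑ j ∈ Finset.range N, F j (N - j) := by
      rw [← Finset.sum_add_distrib]
      refine Finset.sum_congr rfl fun j hj => ?_
      have hj' : N + 1 - j = (N - j) + 1 := by
        have := Finset.mem_range.mp hj; omega
      rw [hj', Finset.sum_range_succ]
    have h2 : ∑ l ∈ Finset.range (N + 1), F (N - l) l
        = ∑ j ∈ Finset.range (N + 1), F j (N - j) := by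
      rw [← Finset.sum_range_reflect (fun j => F j (N - j)) (N + 1)]
      refine Finset.sum_congr rfl fun j hj => ?_
      have := Finset.mem_range.mp hj
      congr 1
      omega
    rw [Finset.sum_range_succ, Finset.sum_range_succ _ N, h1, h2,
      Finset.sum_range_succ _ N, ih]
    simp only [Nat.add_sub_cancel_left, Nat.sub_self]
    norm_num
    abel

lemma asymp_unique' (d : ℕ → ℂ)
    (h : ∀ N : ℕ, ∃ K : ℝ, 0 ≤ K ∧ ∀ m : ℕ, 1 ≤ m →
      ‖∑ j ∈ Finset.range N, ((m : ℂ)⁻¹) ^ j * d j‖ ≤ K * ((m : ℝ)⁻¹) ^ N) :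
    ∀ k, d k = 0 := by
  intro k
  induction k using Nat.strong_induction_on with
  | _ k ih =>
    obtain ⟨K, hK0, hK⟩ := h (k + 1)
    have hbound : ∀ m : ℕ, 1 ≤ m → ‖d k‖ ≤ K / (m : ℝ) := by
      intro m hm
      have hm0 : (0 : ℝ) < (m : ℝ) := by exact_mod_cast hm
      have hsum : ∑ j ∈ Finset.range (k + 1), ((m : ℂ)⁻¹) ^ j * d j
          = ((m : ℂ)⁻¹) ^ k * d k := by
        rw [Finset.sum_range_succ]
        rw [Finset.sum_eq_zero fun j hj => by
          rw [ih j (Finset.mem_range.mp hj), mul_zero]]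
        rw [zero_add]
      have hb := hK m hm
      rw [hsum, norm_mul, norm_pow, norm_inv, Complex.norm_natCast] at hb
      have hpos : (0 : ℝ) < ((m : ℝ)⁻¹) ^ k := by positivity
      calc ‖d k‖ = (((m:ℝ)⁻¹) ^ k * ‖d k‖) / ((m:ℝ)⁻¹) ^ k := by field_simp
        _ ≤ (K * ((m:ℝ)⁻¹) ^ (k+1)) / ((m:ℝ)⁻¹) ^ k := by gcongr
        _ = K / (m : ℝ) := by rw [pow_succ]; field_simp
    have htend : Tendsto (fun m : ℕ => K / (m : ℝ)) atTop (nhds 0) :=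
      tendsto_const_div_atTop_nhds_zero_nat K
    have hle : ‖d k‖ ≤ 0 :=
      ge_of_tendsto htend (eventually_atTop.mpr ⟨1, fun m hm => hbound m hm⟩)
    simpa using le_antisymm hle (norm_nonneg _)

end Aux

/- STATEMENT 14: Suppose each H_m is a nonzero finite-dimensional complex Hilbert space,
(C_j) is an asymptotic expansion for T, and there are n ∈ ℕ and C' ≥ 0 with
dim H_m ≤ C'·m^n for all m ≥ 1.  Suppose further there are ℂ-linear functionals
τ_j : A → ℂ such that for every a ∈ A and every N ∈ ℕ there is K ≥ 0 with
|Tr(T^(m)(a)) − m^n·∑_{j<N} m^{−j} τ_j(a)| ≤ K·m^{n−N} for all m ≥ 1.  Then the formal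
trace is cyclic: for every k ∈ ℕ and all f, g,
∑_{l=0}^{k} τ_l(C_{k−l}(f,g)) = ∑_{l=0}^{k} τ_l(C_{k−l}(g,f)), i.e. the functional
Tr(f) = ν^{−n} ∑_j ν^j τ_j(f) satisfies Tr(f ⋆ g) = Tr(g ⋆ f). -/

theorem formal_trace_is_cyclic
    [∀ m, FiniteDimensional ℂ (H m)] [∀ m, Nontrivial (H m)]
    (T : ∀ m : ℕ, C(X, ℂ) →ₗ[ℂ] (H m →L[ℂ] H m))
    (C : ℕ → C(X, ℂ) →ₗ[ℂ] C(X, ℂ) →ₗ[ℂ] C(X, ℂ))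
    (hC : IsAsymptoticExpansion T C)
    (n : ℕ) (C' : ℝ) (hC' : 0 ≤ C')
    (hdim : ∀ m : ℕ, 1 ≤ m → (Module.finrank ℂ (H m) : ℝ) ≤ C' * (m : ℝ) ^ n)
    (τ : ℕ → C(X, ℂ) →ₗ[ℂ] ℂ)
    (htr : ∀ (a : C(X, ℂ)) (N : ℕ), ∃ K : ℝ, 0 ≤ K ∧ ∀ m : ℕ, 1 ≤ m →
      ‖LinearMap.trace ℂ (H m) (T m a).toLinearMap
          - (m : ℂ) ^ n * ∑ j ∈ Finset.range N, ((m : ℂ)⁻¹) ^ j * τ j a‖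
        ≤ K * (m : ℝ) ^ n * ((m : ℝ)⁻¹) ^ N) :
    ∀ (k : ℕ) (f g : C(X, ℂ)),
      ∑ l ∈ Finset.range (k + 1), τ l (C (k - l) f g)
        = ∑ l ∈ Finset.range (k + 1), τ l (C (k - l) g f) := by
  -- the trace as a linear functional on continuous linear endomorphisms
  set trC : ∀ m : ℕ, (H m →L[ℂ] H m) →ₗ[ℂ] ℂ :=
    fun m => (LinearMap.trace ℂ (H m)).comp (ContinuousLinearMap.coeLM ℂ) with htrC
  have htrCeq : ∀ (m : ℕ) (B : H m →L[ℂ] H m),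
      trC m B = LinearMap.trace ℂ (H m) B.toLinearMap := fun m B => rfl
  -- Key asymptotic expansion of the trace of a product
  have key : ∀ (f g : C(X, ℂ)) (N : ℕ), ∃ K : ℝ, 0 ≤ K ∧ ∀ m : ℕ, 1 ≤ m →
      ‖trC m (T m f * T m g)
          - (m : ℂ) ^ n * ∑ k ∈ Finset.range N, ((m : ℂ)⁻¹) ^ k *
              ∑ l ∈ Finset.range (k + 1), τ l (C (k - l) f g)‖
        ≤ K * (m : ℝ) ^ n * ((m : ℝ)⁻¹) ^ N := by
    intro f g N
    obtain ⟨K0, hK00, hK0⟩ := hC f g N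
    choose Kf hKf0 hKf using fun j => htr (C j f g) (N - j)
    refine ⟨C' * K0 + ∑ j ∈ Finset.range N, Kf j,
      add_nonneg (mul_nonneg hC' hK00) (Finset.sum_nonneg fun j _ => hKf0 j), ?_⟩
    intro m hm
    have hmR : (0 : ℝ) < (m : ℝ) := by exact_mod_cast hm
    set x : ℂ := ((m : ℂ))⁻¹ with hx
    have hxnorm : ‖x‖ = ((m : ℝ))⁻¹ := by
      rw [hx, norm_inv, Complex.norm_natCast]
    -- the triangle reindexing
    have htri : ∑ j ∈ Finset.range N, x ^ j *
          ∑ l ∈ Finset.range (N - j), x ^ l * τ l (C j f g)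
        = ∑ k ∈ Finset.range N, x ^ k *
            ∑ l ∈ Finset.range (k + 1), τ l (C (k - l) f g) := by
      have t := triangle_sum' (fun j l => x ^ j * (x ^ l * τ l (C j f g))) N
      calc ∑ j ∈ Finset.range N, x ^ j * ∑ l ∈ Finset.range (N - j), x ^ l * τ l (C j f g)
          = ∑ j ∈ Finset.range N, ∑ l ∈ Finset.range (N - j),
              x ^ j * (x ^ l * τ l (C j f g)) := by
            refine Finset.sum_congr rfl fun j _ => ?_
            rw [Finset.mul_sum]
        _ = ∑ k ∈ Finset.range N, ∑ l ∈ Finset.range (k + 1),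
              x ^ (k - l) * (x ^ l * τ l (C (k - l) f g)) := t
        _ = ∑ k ∈ Finset.range N, x ^ k *
              ∑ l ∈ Finset.range (k + 1), τ l (C (k - l) f g) := by
            refine Finset.sum_congr rfl fun k _ => ?_
            rw [Finset.mul_sum]
            refine Finset.sum_congr rfl fun l hl => ?_
            have hlk : l ≤ k := Nat.lt_succ_iff.mp (Finset.mem_range.mp hl)
            rw [← mul_assoc, ← pow_add, Nat.sub_add_cancel hlk]
    -- the decomposition of the error
    have hdecomp : trC m (T m f * T m g)
          - (m : ℂ) ^ n * ∑ k ∈ Finset.range N, x ^ k *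
              ∑ l ∈ Finset.range (k + 1), τ l (C (k - l) f g)
        = trC m (T m f * T m g - ∑ j ∈ Finset.range N, x ^ j • T m (C j f g))
          + ∑ j ∈ Finset.range N, x ^ j *
              (trC m (T m (C j f g))
                - (m : ℂ) ^ n * ∑ l ∈ Finset.range (N - j), x ^ l * τ l (C j f g)) := by
      rw [map_sub, map_sum]
      simp only [_root_.map_smul, smul_eq_mul]
      have e1 : ∑ j ∈ Finset.range N, x ^ j *
            (trC m (T m (C j f g))
              - (m : ℂ) ^ n * ∑ l ∈ Finset.range (N - j), x ^ l * τ l (C j f g))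
          = (∑ j ∈ Finset.range N, x ^ j * trC m (T m (C j f g)))
            - (m : ℂ) ^ n * ∑ j ∈ Finset.range N, x ^ j *
                ∑ l ∈ Finset.range (N - j), x ^ l * τ l (C j f g) := by
        rw [Finset.mul_sum, ← Finset.sum_sub_distrib]
        exact Finset.sum_congr rfl fun j _ => by ring
      rw [e1, htri]
      ring
    rw [hdecomp]
    have hb1 : ‖trC m (T m f * T m g - ∑ j ∈ Finset.range N, x ^ j • T m (C j f g))‖
        ≤ (C' * (m : ℝ) ^ n) * (K0 * ((m : ℝ)⁻¹) ^ N) := by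
      rw [htrCeq]
      refine le_trans (norm_trace_le' _) ?_
      exact mul_le_mul (hdim m hm) (hK0 m hm) (norm_nonneg _)
        (by positivity)
    have hb2 : ‖∑ j ∈ Finset.range N, x ^ j *
          (trC m (T m (C j f g))
            - (m : ℂ) ^ n * ∑ l ∈ Finset.range (N - j), x ^ l * τ l (C j f g))‖
        ≤ ∑ j ∈ Finset.range N, Kf j * (m : ℝ) ^ n * ((m : ℝ)⁻¹) ^ N := by
      refine le_trans (norm_sum_le _ _) (Finset.sum_le_sum fun j hj => ?_)
      have hjN : j ≤ N := le_of_lt (Finset.mem_range.mp hj)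
      rw [norm_mul, norm_pow, hxnorm]
      calc ((m : ℝ)⁻¹) ^ j * ‖trC m (T m (C j f g))
            - (m : ℂ) ^ n * ∑ l ∈ Finset.range (N - j), x ^ l * τ l (C j f g)‖
          ≤ ((m : ℝ)⁻¹) ^ j * (Kf j * (m : ℝ) ^ n * ((m : ℝ)⁻¹) ^ (N - j)) := by
            refine mul_le_mul_of_nonneg_left ?_ (by positivity)
            exact hKf j m hm
        _ = Kf j * (m : ℝ) ^ n * ((m : ℝ)⁻¹) ^ N := by
            rw [show Kf j * (m : ℝ) ^ n * ((m : ℝ)⁻¹) ^ N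
                = Kf j * (m : ℝ) ^ n * (((m : ℝ)⁻¹) ^ j * ((m : ℝ)⁻¹) ^ (N - j)) by
              rw [← pow_add, Nat.add_sub_cancel' hjN]]
            ring
    calc ‖trC m (T m f * T m g - ∑ j ∈ Finset.range N, x ^ j • T m (C j f g))
          + ∑ j ∈ Finset.range N, x ^ j *
              (trC m (T m (C j f g))
                - (m : ℂ) ^ n * ∑ l ∈ Finset.range (N - j), x ^ l * τ l (C j f g))‖
        ≤ (C' * (m : ℝ) ^ n) * (K0 * ((m : ℝ)⁻¹) ^ N)
          + ∑ j ∈ Finset.range N, Kf j * (m : ℝ) ^ n * ((m : ℝ)⁻¹) ^ N :=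
          le_trans (norm_add_le _ _) (add_le_add hb1 hb2)
      _ = (C' * K0 + ∑ j ∈ Finset.range N, Kf j) * (m : ℝ) ^ n * ((m : ℝ)⁻¹) ^ N := by
          rw [show ∑ j ∈ Finset.range N, Kf j * (m : ℝ) ^ n * ((m : ℝ)⁻¹) ^ N
              = (∑ j ∈ Finset.range N, Kf j) * ((m : ℝ) ^ n * ((m : ℝ)⁻¹) ^ N) by
            rw [Finset.sum_mul]
            exact Finset.sum_congr rfl fun j _ => by ring]
          ring
  -- cyclicity of the actual trace
  intro k f g
  have hsym : ∀ m : ℕ, trC m (T m f * T m g) = trC m (T m g * T m f) := by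
    intro m
    rw [htrCeq, htrCeq, ContinuousLinearMap.mul_def, ContinuousLinearMap.mul_def,
      ContinuousLinearMap.toLinearMap_comp, ContinuousLinearMap.toLinearMap_comp,
      LinearMap.trace_comp_comm']
  have hzero : ∀ k, (∑ l ∈ Finset.range (k + 1), τ l (C (k - l) f g))
      - (∑ l ∈ Finset.range (k + 1), τ l (C (k - l) g f)) = 0 := by
    refine asymp_unique' _ ?_
    intro N
    obtain ⟨K1, hK10, hK1⟩ := key f g N
    obtain ⟨K2, hK20, hK2⟩ := key g f N
    refine ⟨K1 + K2, add_nonneg hK10 hK20, ?_⟩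
    intro m hm
    have hmR : (0 : ℝ) < (m : ℝ) := by exact_mod_cast hm
    have hmn : (0 : ℝ) < (m : ℝ) ^ n := by positivity
    have hrw : ∑ j ∈ Finset.range N, ((m : ℂ)⁻¹) ^ j *
          ((∑ l ∈ Finset.range (j + 1), τ l (C (j - l) f g))
            - ∑ l ∈ Finset.range (j + 1), τ l (C (j - l) g f))
        = (∑ j ∈ Finset.range N, ((m : ℂ)⁻¹) ^ j *
              ∑ l ∈ Finset.range (j + 1), τ l (C (j - l) f g))
          - ∑ j ∈ Finset.range N, ((m : ℂ)⁻¹) ^ j *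
              ∑ l ∈ Finset.range (j + 1), τ l (C (j - l) g f) := by
      rw [← Finset.sum_sub_distrib]
      exact Finset.sum_congr rfl fun j _ => by ring
    have hmain : ‖(m : ℂ) ^ n * (∑ j ∈ Finset.range N, ((m : ℂ)⁻¹) ^ j *
          ((∑ l ∈ Finset.range (j + 1), τ l (C (j - l) f g))
            - ∑ l ∈ Finset.range (j + 1), τ l (C (j - l) g f)))‖
        ≤ (K1 + K2) * (m : ℝ) ^ n * ((m : ℝ)⁻¹) ^ N := by
      have h1 := hK1 m hm
      have h2 := hK2 m hm
      rw [hsym m] at h1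
      calc ‖(m : ℂ) ^ n * (∑ j ∈ Finset.range N, ((m : ℂ)⁻¹) ^ j *
              ((∑ l ∈ Finset.range (j + 1), τ l (C (j - l) f g))
                - ∑ l ∈ Finset.range (j + 1), τ l (C (j - l) g f)))‖
          = ‖(trC m (T m g * T m f)
                - (m : ℂ) ^ n * ∑ j ∈ Finset.range N, ((m : ℂ)⁻¹) ^ j *
                    ∑ l ∈ Finset.range (j + 1), τ l (C (j - l) g f))
              - (trC m (T m g * T m f)
                - (m : ℂ) ^ n * ∑ j ∈ Finset.range N, ((m : ℂ)⁻¹) ^ j *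
                    ∑ l ∈ Finset.range (j + 1), τ l (C (j - l) f g))‖ := by
            rw [hrw]; congr 1; ring
        _ ≤ ‖trC m (T m g * T m f)
                - (m : ℂ) ^ n * ∑ j ∈ Finset.range N, ((m : ℂ)⁻¹) ^ j *
                    ∑ l ∈ Finset.range (j + 1), τ l (C (j - l) g f)‖
            + ‖trC m (T m g * T m f)
                - (m : ℂ) ^ n * ∑ j ∈ Finset.range N, ((m : ℂ)⁻¹) ^ j *
                    ∑ l ∈ Finset.range (j + 1), τ l (C (j - l) f g)‖ := norm_sub_le _ _
        _ ≤ K2 * (m : ℝ) ^ n * ((m : ℝ)⁻¹) ^ N + K1 * (m : ℝ) ^ n * ((m : ℝ)⁻¹) ^ N :=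
            add_le_add h2 h1
        _ = (K1 + K2) * (m : ℝ) ^ n * ((m : ℝ)⁻¹) ^ N := by ring
    rw [norm_mul, norm_pow, Complex.norm_natCast] at hmain
    calc ‖∑ j ∈ Finset.range N, ((m : ℂ)⁻¹) ^ j *
            ((∑ l ∈ Finset.range (j + 1), τ l (C (j - l) f g))
              - ∑ l ∈ Finset.range (j + 1), τ l (C (j - l) g f))‖
        = ((m : ℝ) ^ n * ‖∑ j ∈ Finset.range N, ((m : ℂ)⁻¹) ^ j *
            ((∑ l ∈ Finset.range (j + 1), τ l (C (j - l) f g))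
              - ∑ l ∈ Finset.range (j + 1), τ l (C (j - l) g f))‖) / (m : ℝ) ^ n := by
          field_simp
      _ ≤ ((K1 + K2) * (m : ℝ) ^ n * ((m : ℝ)⁻¹) ^ N) / (m : ℝ) ^ n := by gcongr
      _ = (K1 + K2) * ((m : ℝ)⁻¹) ^ N := by field_simp
  exact sub_eq_zero.mp (hzero k)
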